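/- Every strict m-isometry on ℝ² satisfies m = 1 or m = 3, and every strict 3-isometry on ℝ² has the form ±I + Q where Q is a nonzero 2×2 nilpotent matrix. -/

import Mathlib

open scoped BigOperators
open fwdDiff Function

/-- `T` is an `m`-isometry on a real Hilbert space. -/
def IsMIsometryR {H : Type*} [NormedAddCommGroup H] [InnerProductSpace ℝ H]
    (m : ℕ) (T : H →L[ℝ] H) : Prop :=
  ∀ x : H, ∑ k ∈ Finset.range (m + 1),
    (-1 : ℝ) ^ (m - k) * (m.choose k) * ‖(T ^ k) x‖ ^ 2 = 0

namespace Aux9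

local notation "E9" => EuclideanSpace ℝ (Fin 2)

noncomputable def e0 : E9 := EuclideanSpace.single 0 (1:ℝ)
noncomputable def e1 : E9 := EuclideanSpace.single 1 (1:ℝ)

noncomputable def fseq (T : E9 →L[ℝ] E9) (x : E9) : ℕ → ℝ := fun k => ‖(T ^ k) x‖ ^ 2

abbrev dd : (ℕ → ℝ) → (ℕ → ℝ) := fwdDiff (1 : ℕ)

lemma v1 (g : ℕ → ℝ) (n : ℕ) : dd^[1] g n = g (n+1) - g n := rfl

lemma ddsucc (j : ℕ) (g : ℕ → ℝ) (n : ℕ) : dd^[j+1] g n = dd^[j] g (n+1) - dd^[j] g n := by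
  rw [Function.iterate_succ_apply']; rfl

lemma v2 (g : ℕ → ℝ) (n : ℕ) : dd^[2] g n = g (n+2) - 2*g (n+1) + g n := by
  have h := ddsucc 1 g n
  rw [h, v1, v1, show n+1+1 = n+2 from rfl]; ring

lemma v3 (g : ℕ → ℝ) (n : ℕ) : dd^[3] g n = g (n+3) - 3*g (n+2) + 3*g (n+1) - g n := by
  have h := ddsucc 2 g n
  rw [h, v2, v2, show n+1+1 = n+2 from rfl, show n+1+2 = n+3 from rfl]; ring

lemma v4 (g : ℕ → ℝ) (n : ℕ) : dd^[4] g n = g (n+4) - 4*g (n+3) + 6*g (n+2) - 4*g (n+1) + g n := by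
  have h := ddsucc 3 g n
  rw [h, v3, v3, show n+1+1 = n+2 from rfl, show n+1+2 = n+3 from rfl,
    show n+1+3 = n+4 from rfl]; ring

lemma zero_iter (j : ℕ) : dd^[j] (fun _ => (0:ℝ)) = fun _ => 0 := by
  induction j with
  | zero => rfl
  | succ j ih => rw [Function.iterate_succ_apply, show dd (fun _ => (0:ℝ)) = fun _ => 0 from by
      funext n; simp [dd, fwdDiff], ih]

lemma up_lemma (g : ℕ → ℝ) (s j : ℕ) (hsj : s ≤ j) (h : ∀ n, dd^[s] g n = 0) :
    ∀ n, dd^[j] g n = 0 := by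
  obtain ⟨i, rfl⟩ := Nat.exists_eq_add_of_le hsj
  intro n
  rw [add_comm, Function.iterate_add_apply, funext h, zero_iter]

/-- Key cancellation lemma : a polynomial sequence killed by `q(Δ)` with `q 0 ≠ 0` vanishes. -/
lemma keyK (a b c e : ℝ) (ha : a ≠ 0) :
    ∀ (M : ℕ) (g : ℕ → ℝ),
      (∀ n, dd^[M] g n = 0) →
      (∀ n, a * g n + b * dd^[1] g n + c * dd^[2] g n + e * dd^[3] g n = 0) →
      ∀ n, g n = 0 := by
  intro M
  induction M with
  | zero => intro g h1 _ n; simpa using h1 n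
  | succ M IH =>
    intro g h1 h2
    have hg' : ∀ n, dd^[1] g n = 0 := by
      apply IH (dd^[1] g)
      · intro n
        rw [← Function.iterate_add_apply]
        exact h1 n
      · intro n
        have h₀ := h2 n
        have h₁ := h2 (n + 1)
        rw [← Function.iterate_add_apply, ← Function.iterate_add_apply,
          ← Function.iterate_add_apply]
        simp only [Nat.reduceAdd]
        rw [v1, v2, v3, v4]
        rw [v1, v2, v3] at h₀ h₁
        simp only [add_assoc, Nat.reduceAdd] at h₁ ⊢
        linear_combination h₁ - h₀
    intro n
    have h22 : dd^[2] g n = 0 := up_lemma g 1 2 (by norm_num) hg' n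
    have h33 : dd^[3] g n = 0 := up_lemma g 1 3 (by norm_num) hg' n
    have hc := h2 n
    rw [hg' n, h22, h33] at hc
    have hag : a * g n = 0 := by linarith
    rcases mul_eq_zero.mp hag with h | h
    · exact absurd h ha
    · exact h

lemma sum_eq (T : E9 →L[ℝ] E9) (x : E9) (m n : ℕ) :
    dd^[m] (fseq T x) n
      = ∑ k ∈ Finset.range (m+1), (-1:ℝ)^(m-k) * (m.choose k) * fseq T x (n + k) := by
  rw [fwdDiff_iter_eq_sum_shift]
  refine Finset.sum_congr rfl fun k _ => ?_
  rw [smul_eq_mul, mul_one, zsmul_eq_mul]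
  push_cast
  ring

lemma isM_iff (m : ℕ) (T : E9 →L[ℝ] E9) :
    IsMIsometryR m T ↔ ∀ x, dd^[m] (fseq T x) 0 = 0 := by
  unfold IsMIsometryR
  constructor
  · intro h x; rw [sum_eq]; simpa [fseq] using h x
  · intro h x; have := h x; rw [sum_eq] at this; simpa [fseq] using this

lemma fseq_shift (T : E9 →L[ℝ] E9) (x : E9) (n j : ℕ) :
    fseq T x (n + j) = fseq T ((T^n) x) j := by
  unfold fseq
  rw [add_comm n j, pow_add, ContinuousLinearMap.mul_apply]

lemma fseq_shift0 (T : E9 →L[ℝ] E9) (x : E9) (n : ℕ) :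
    fseq T x n = fseq T ((T^n) x) 0 := fseq_shift T x n 0

lemma isM_all {m : ℕ} {T : E9 →L[ℝ] E9} (h : IsMIsometryR m T) :
    ∀ x n, dd^[m] (fseq T x) n = 0 := by
  intro x n
  rw [sum_eq]
  have h' := (isM_iff m T).mp h ((T^n) x)
  rw [sum_eq] at h'
  simp only [zero_add] at h'
  rw [Finset.sum_congr rfl fun k _ => by rw [fseq_shift T x n k]]
  exact h'

lemma mk_isM {T : E9 →L[ℝ] E9} {s : ℕ} (hs : ∀ x n, dd^[s] (fseq T x) n = 0)
    {j : ℕ} (hsj : s ≤ j) : IsMIsometryR j T :=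
  (isM_iff j T).mpr fun x => up_lemma _ s j hsj (hs x) 0

def RepM (T : E9 →L[ℝ] E9) (A : Matrix (Fin 2) (Fin 2) ℝ) : Prop :=
  ∀ (y : E9) (i : Fin 2), T y i = A i 0 * y 0 + A i 1 * y 1

lemma norm_sq (y : E9) : ‖y‖^2 = y 0 ^2 + y 1 ^2 := by
  rw [EuclideanSpace.norm_eq, Real.sq_sqrt (by positivity)]
  simp [Fin.sum_univ_two, sq_abs]

lemma exists_rep (T : E9 →L[ℝ] E9) : ∃ A, RepM T A := by
  refine ⟨Matrix.of ![![T e0 0, T e1 0], ![T e0 1, T e1 1]], fun y i => ?_⟩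
  have hy : y = y 0 • e0 + y 1 • e1 := by
    ext j; fin_cases j <;> simp [e0, e1, EuclideanSpace.single_apply]
  conv_lhs => rw [hy]
  rw [map_add, map_smul, map_smul]
  fin_cases i <;> simp <;> ring

lemma pow_succ_apply (T : E9 →L[ℝ] E9) (k : ℕ) (z : E9) :
    (T^(k+1)) z = T ((T^k) z) := by
  rw [pow_succ', ContinuousLinearMap.mul_apply]

/-- fundamental cubic recurrence: valid for every 2x2 matrix. -/
lemma F1 {T : E9 →L[ℝ] E9} {A : Matrix (Fin 2) (Fin 2) ℝ} (hA : RepM T A) (y : E9) :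
    ‖(T^3) y‖^2
      - ((A 0 0 + A 1 1)^2 - (A 0 0*A 1 1 - A 0 1*A 1 0)) * ‖(T^2) y‖^2
      + ((A 0 0*A 1 1 - A 0 1*A 1 0) * (A 0 0 + A 1 1)^2 - (A 0 0*A 1 1 - A 0 1*A 1 0)^2) * ‖T y‖^2
      - (A 0 0*A 1 1 - A 0 1*A 1 0)^3 * ‖y‖^2 = 0 := by
  have h3 : (T^3) y = T (T (T y)) := by
    rw [pow_succ, pow_succ, pow_one, ContinuousLinearMap.mul_apply,
      ContinuousLinearMap.mul_apply]
  have h2 : (T^2) y = T (T y) := by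
    rw [pow_two, ContinuousLinearMap.mul_apply]
  have ha : ∀ (z : E9) (i : Fin 2), T z i = A i 0 * z 0 + A i 1 * z 1 := hA
  rw [h3, h2, norm_sq, norm_sq, norm_sq, norm_sq]
  simp only [ha]
  ring

/-- The cubic recurrence in forward-difference form. -/
lemma recc {T : E9 →L[ℝ] E9} {A : Matrix (Fin 2) (Fin 2) ℝ} (hA : RepM T A) (x : E9) (n : ℕ) :
    (1 - ((A 0 0 + A 1 1)^2 - (A 0 0*A 1 1 - A 0 1*A 1 0))
        + ((A 0 0*A 1 1 - A 0 1*A 1 0) * (A 0 0 + A 1 1)^2 - (A 0 0*A 1 1 - A 0 1*A 1 0)^2)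
        - (A 0 0*A 1 1 - A 0 1*A 1 0)^3) * fseq T x n
      + (3 - 2*((A 0 0 + A 1 1)^2 - (A 0 0*A 1 1 - A 0 1*A 1 0))
        + ((A 0 0*A 1 1 - A 0 1*A 1 0) * (A 0 0 + A 1 1)^2 - (A 0 0*A 1 1 - A 0 1*A 1 0)^2))
          * dd^[1] (fseq T x) n
      + (3 - ((A 0 0 + A 1 1)^2 - (A 0 0*A 1 1 - A 0 1*A 1 0))) * dd^[2] (fseq T x) n
      + 1 * dd^[3] (fseq T x) n = 0 := by
  rw [v1, v2, v3, fseq_shift T x n 1, fseq_shift T x n 2, fseq_shift T x n 3, fseq_shift0 T x n]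
  have hF := F1 hA ((T^n) x)
  simp only [fseq, pow_one]
  rw [pow_zero, ContinuousLinearMap.one_apply]
  linear_combination hF

lemma slope_nonneg {A0 s : ℝ} (h : ∀ k : ℕ, 0 ≤ A0 + k * s) : 0 ≤ s := by
  by_contra hs
  push_neg at hs
  have hns : 0 < -s := by linarith
  have hN : A0 / (-s) < (Nat.ceil (A0 / (-s)) + 1 : ℕ) := by
    push_cast
    linarith [Nat.le_ceil (A0 / (-s))]
  rw [div_lt_iff₀ hns] at hN
  have := h (Nat.ceil (A0 / (-s)) + 1)
  nlinarith

lemma lin_of_dd2 {g : ℕ → ℝ} (h : ∀ n, dd^[2] g n = 0) :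
    ∀ n : ℕ, g n = g 0 + n * (g 1 - g 0) := by
  have hstep : ∀ n : ℕ, g (n+1) - g n = g 1 - g 0 := by
    intro n
    induction n with
    | zero => rfl
    | succ n ih =>
      have h2 := h n
      rw [v2] at h2
      rw [show n+1+1 = n+2 from rfl]
      linarith
  intro n
  induction n with
  | zero => simp
  | succ n ih =>
    have := hstep n
    push_cast
    nlinarith [hstep n, ih]

noncomputable def bseq (T : E9 →L[ℝ] E9) : ℕ → ℝ :=
  fun k => (T^k) e0 0 * (T^k) e1 0 + (T^k) e0 1 * (T^k) e1 1

lemma bseq_eq (T : E9 →L[ℝ] E9) (k : ℕ) :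
    bseq T k = (fseq T (e0 + e1) k - fseq T e0 k - fseq T e1 k) / 2 := by
  simp only [bseq, fseq, map_add, norm_sq, PiLp.add_apply]
  ring

lemma need2 {T : E9 →L[ℝ] E9} (h2 : ∀ x n, dd^[2] (fseq T x) n = 0) :
    ∀ x n, dd^[1] (fseq T x) n = 0 := by
  obtain ⟨A, hA⟩ := exists_rep T
  have ha : ∀ (z : E9) (i : Fin 2), T z i = A i 0 * z 0 + A i 1 * z 1 := hA
  have he00 : (e0 : E9) 0 = 1 := by simp [e0, EuclideanSpace.single_apply]
  have he01 : (e0 : E9) 1 = 0 := by simp [e0, EuclideanSpace.single_apply]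
  have he10 : (e1 : E9) 0 = 0 := by simp [e1, EuclideanSpace.single_apply]
  have he11 : (e1 : E9) 1 = 1 := by simp [e1, EuclideanSpace.single_apply]
  have hT0 : ∀ (z : E9), (T^0) z = z := fun z => by rw [pow_zero, ContinuousLinearMap.one_apply]
  have hw : ∀ k, (T^k) e0 0 * (T^k) e1 1 - (T^k) e0 1 * (T^k) e1 0
      = (A 0 0 * A 1 1 - A 0 1 * A 1 0)^k := by
    intro k; induction k with
    | zero => rw [hT0, hT0, pow_zero, he00, he01, he10, he11]; ring
    | succ k ih =>
      rw [pow_succ_apply, pow_succ_apply, ha, ha, ha, ha, pow_succ]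
      linear_combination (A 0 0 * A 1 1 - A 0 1 * A 1 0) * ih
  have hgram : ∀ k, fseq T e0 k * fseq T e1 k - bseq T k ^ 2
      = ((A 0 0 * A 1 1 - A 0 1 * A 1 0)^2)^k := by
    intro k
    rw [← pow_mul, mul_comm 2 k, pow_mul]
    simp only [fseq, bseq, norm_sq]
    linear_combination ((T^k) e0 0 * (T^k) e1 1 - (T^k) e0 1 * (T^k) e1 0
      + (A 0 0 * A 1 1 - A 0 1 * A 1 0)^k) * hw k
  have hb2 : ∀ n, dd^[2] (bseq T) n = 0 := by
    intro n
    have h01 := h2 (e0+e1) n; have h02 := h2 e0 n; have h03 := h2 e1 n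
    rw [v2] at h01 h02 h03 ⊢
    rw [bseq_eq T (n+2), bseq_eq T (n+1), bseq_eq T n]
    linarith
  have hlina := lin_of_dd2 (h2 e0)
  have hlinc := lin_of_dd2 (h2 e1)
  have hlinb := lin_of_dd2 hb2
  have ha0 : fseq T e0 0 = 1 := by
    simp only [fseq]; rw [hT0, norm_sq, he00, he01]; norm_num
  have hc0 : fseq T e1 0 = 1 := by
    simp only [fseq]; rw [hT0, norm_sq, he10, he11]; norm_num
  have hb0 : bseq T 0 = 0 := by
    simp only [bseq]; rw [hT0, hT0, he00, he01, he10, he11]; ring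
  have hq : ∀ n : ℕ, ((A 0 0 * A 1 1 - A 0 1 * A 1 0)^2)^n
      = (1 + n*(fseq T e0 1 - 1)) * (1 + n*(fseq T e1 1 - 1)) - (n * bseq T 1)^2 := by
    intro n
    rw [← hgram n, hlina n, hlinc n, hlinb n, ha0, hc0, hb0]
    ring
  have h1' := hq 1; have h2' := hq 2; have h3' := hq 3
  push_cast at h1' h2' h3'
  have hδ1 : (A 0 0 * A 1 1 - A 0 1 * A 1 0)^2 = 1 := by
    have hcube : ((A 0 0 * A 1 1 - A 0 1 * A 1 0)^2 - 1)^3 = 0 := by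
      linear_combination h3' - 3*h2' + 3*h1'
    have := pow_eq_zero_iff (n := 3) (by norm_num) |>.mp hcube
    linarith
  rw [hδ1] at h1' h2'
  have hfpos : ∀ (x : E9) (k : ℕ), 0 ≤ fseq T x k := by
    intro x k; simp only [fseq]; positivity
  have hαpos : 0 ≤ fseq T e0 1 - 1 := by
    apply slope_nonneg (A0 := 1)
    intro k
    have h := hlina k; rw [ha0] at h
    calc (0:ℝ) ≤ fseq T e0 k := hfpos e0 k
    _ = 1 + k * (fseq T e0 1 - 1) := h
  have hγpos : 0 ≤ fseq T e1 1 - 1 := by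
    apply slope_nonneg (A0 := 1)
    intro k
    have h := hlinc k; rw [hc0] at h
    calc (0:ℝ) ≤ fseq T e1 k := hfpos e1 k
    _ = 1 + k * (fseq T e1 1 - 1) := h
  have hsum0 : (fseq T e0 1 - 1) + (fseq T e1 1 - 1) = 0 := by
    linear_combination (-2)*h1' + h2'/2
  have hp1 : fseq T e0 1 = 1 := by linarith
  have hq1 : fseq T e1 1 = 1 := by linarith
  have hr : bseq T 1 = 0 := by
    have hr2 : bseq T 1 ^ 2 = 0 := by
      rw [hp1, hq1] at h1'
      linear_combination h1'
    exact pow_eq_zero_iff (n := 2) (by norm_num) |>.mp hr2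
  have ha1 : A 0 0^2 + A 1 0^2 = 1 := by
    have h := hp1
    simp only [fseq] at h
    rw [pow_one, norm_sq, ha, ha, he00, he01] at h
    linear_combination h
  have hc1 : A 0 1^2 + A 1 1^2 = 1 := by
    have h := hq1
    simp only [fseq] at h
    rw [pow_one, norm_sq, ha, ha, he10, he11] at h
    linear_combination h
  have hb1 : A 0 0*A 0 1 + A 1 0*A 1 1 = 0 := by
    have h := hr
    simp only [bseq] at h
    rw [pow_one, ha, ha, ha, ha, he00, he01, he10, he11] at h
    linear_combination h
  have hkey : ∀ x : E9, fseq T x 1 - fseq T x 0 = 0 := by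
    intro x
    simp only [fseq]
    rw [pow_one, hT0, norm_sq, norm_sq, ha, ha]
    linear_combination (x 0^2) * ha1 + (x 1^2) * hc1 + (2 * x 0 * x 1) * hb1
  intro x n
  rw [v1, fseq_shift T x n 1, fseq_shift0 T x n]
  have := hkey ((T^n) x)
  linarith

lemma fseq_e00 (T : E9 →L[ℝ] E9) : fseq T e0 0 = 1 := by
  simp only [fseq]
  rw [pow_zero, ContinuousLinearMap.one_apply, norm_sq]
  have he00 : (e0 : E9) 0 = 1 := by simp [e0, EuclideanSpace.single_apply]
  have he01 : (e0 : E9) 1 = 0 := by simp [e0, EuclideanSpace.single_apply]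
  rw [he00, he01]; norm_num

lemma dichotomy {T : E9 →L[ℝ] E9} {m : ℕ} (h : IsMIsometryR m T) :
    (∀ x n, dd^[1] (fseq T x) n = 0) ∨
    ((∀ x n, dd^[3] (fseq T x) n = 0) ∧
      ∃ A : Matrix (Fin 2) (Fin 2) ℝ, RepM T A ∧
        A 0 0 * A 1 1 - A 0 1 * A 1 0 = 1 ∧ (A 0 0 + A 1 1 = 2 ∨ A 0 0 + A 1 1 = -2)) := by
  obtain ⟨A, hA⟩ := exists_rep T
  have hm := isM_all h
  have hψ0 : 1 - ((A 0 0 + A 1 1)^2 - (A 0 0*A 1 1 - A 0 1*A 1 0))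
      + ((A 0 0*A 1 1 - A 0 1*A 1 0) * (A 0 0 + A 1 1)^2 - (A 0 0*A 1 1 - A 0 1*A 1 0)^2)
      - (A 0 0*A 1 1 - A 0 1*A 1 0)^3 = 0 := by
    by_contra hne
    have hzero := keyK _ _ _ _ hne m (fseq T e0) (hm e0) (fun n => recc hA e0 n) 0
    rw [fseq_e00] at hzero
    norm_num at hzero
  by_cases hψ1 : 3 - 2*((A 0 0 + A 1 1)^2 - (A 0 0*A 1 1 - A 0 1*A 1 0))
      + ((A 0 0*A 1 1 - A 0 1*A 1 0) * (A 0 0 + A 1 1)^2 - (A 0 0*A 1 1 - A 0 1*A 1 0)^2) = 0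
  · by_cases hψ2 : 3 - ((A 0 0 + A 1 1)^2 - (A 0 0*A 1 1 - A 0 1*A 1 0)) = 0
    · right
      constructor
      · intro x n
        linear_combination (recc hA x n) - (fseq T x n) * hψ0
          - (dd^[1] (fseq T x) n) * hψ1 - (dd^[2] (fseq T x) n) * hψ2
      · have hd1 : A 0 0*A 1 1 - A 0 1*A 1 0 = 1 := by
          linear_combination (hψ1 + ((A 0 0*A 1 1 - A 0 1*A 1 0) - 2) * hψ2) / 3
        have ht2 : (A 0 0 + A 1 1)^2 = 4 := by linear_combination -hψ2 + hd1
        have hf : ((A 0 0 + A 1 1) - 2) * ((A 0 0 + A 1 1) + 2) = 0 := by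
          linear_combination ht2
        refine ⟨A, hA, hd1, ?_⟩
        rcases mul_eq_zero.mp hf with h' | h'
        · left; linarith
        · right; linarith
    · left
      have h2all : ∀ x n, dd^[2] (fseq T x) n = 0 := by
        intro x
        apply keyK _ 1 0 0 hψ2 m (dd^[2] (fseq T x))
        · intro n
          rw [← Function.iterate_add_apply]
          exact up_lemma (fseq T x) m (m+2) (by omega) (hm x) n
        · intro n
          have e1 : dd^[1] (dd^[2] (fseq T x)) n = dd^[3] (fseq T x) n := by
            rw [← Function.iterate_add_apply]
          rw [e1]
          linear_combination (recc hA x n) - (fseq T x n) * hψ0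
            - (dd^[1] (fseq T x) n) * hψ1
      exact need2 h2all
  · left
    intro x
    apply keyK _ (3 - ((A 0 0 + A 1 1)^2 - (A 0 0*A 1 1 - A 0 1*A 1 0))) 1 0 hψ1 m (dd^[1] (fseq T x))
    · intro n
      rw [← Function.iterate_add_apply]
      exact up_lemma (fseq T x) m (m+1) (by omega) (hm x) n
    · intro n
      have e1 : dd^[1] (dd^[1] (fseq T x)) n = dd^[2] (fseq T x) n := by
        rw [← Function.iterate_add_apply]
      have e2 : dd^[2] (dd^[1] (fseq T x)) n = dd^[3] (fseq T x) n := by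
        rw [← Function.iterate_add_apply]
      rw [e1, e2]
      linear_combination (recc hA x n) - (fseq T x n) * hψ0

lemma isM2_of_norm {T : E9 →L[ℝ] E9} (h : ∀ z : E9, ‖T z‖ = ‖z‖) : IsMIsometryR 2 T := by
  apply mk_isM (s := 2) ?_ (le_refl 2)
  intro x n
  rw [v2]
  have hfx : ∀ k, fseq T x k = ‖x‖^2 := by
    intro k; induction k with
    | zero => simp only [fseq]; rw [pow_zero, ContinuousLinearMap.one_apply]
    | succ k ih => simp only [fseq] at ih ⊢; rw [pow_succ_apply, h]; exact ih
  rw [hfx, hfx, hfx]; ring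

end Aux9

open Aux9

theorem stmt9 :
    (∀ (m : ℕ), 1 ≤ m →
      ∀ T : EuclideanSpace ℝ (Fin 2) →L[ℝ] EuclideanSpace ℝ (Fin 2),
      IsMIsometryR m T → ¬ IsMIsometryR (m - 1) T → m = 1 ∨ m = 3) ∧
    (∀ T : EuclideanSpace ℝ (Fin 2) →L[ℝ] EuclideanSpace ℝ (Fin 2),
      IsMIsometryR 3 T → ¬ IsMIsometryR 2 T →
      ∃ Q : EuclideanSpace ℝ (Fin 2) →L[ℝ] EuclideanSpace ℝ (Fin 2),
        Q ≠ 0 ∧ IsNilpotent Q ∧ (T = 1 + Q ∨ T = -1 + Q)) := by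
  constructor
  · intro m hm T hIsM hnot
    rcases dichotomy hIsM with hL | ⟨h3, _⟩
    · left
      by_contra hne
      exact hnot (mk_isM hL (by omega : 1 ≤ m - 1))
    · have hne2 : m ≠ 2 := by
        intro he; subst he
        exact hnot (mk_isM (need2 (isM_all hIsM)) (by norm_num : 1 ≤ 2 - 1))
      have hle3 : m ≤ 3 := by
        by_contra hgt
        exact hnot (mk_isM h3 (by omega : 3 ≤ m - 1))
      omega
  · intro T h3isM hnot2
    rcases dichotomy h3isM with hL | ⟨h3, A, hA, hdet, htr⟩
    · exact absurd (mk_isM hL (by norm_num : 1 ≤ 2)) hnot2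
    · have haa : ∀ (z : EuclideanSpace ℝ (Fin 2)) (i : Fin 2),
          T z i = A i 0 * z 0 + A i 1 * z 1 := hA
      rcases htr with ht | ht
      · refine ⟨T - 1, ?_, ⟨2, ?_⟩, Or.inl (by abel)⟩
        · intro hQ0
          have hT1 : T = 1 := by rwa [sub_eq_zero] at hQ0
          exact hnot2 (isM2_of_norm (by intro z; rw [hT1, ContinuousLinearMap.one_apply]))
        · apply ContinuousLinearMap.ext
          intro y
          have hsq : ((T - 1 : EuclideanSpace ℝ (Fin 2) →L[ℝ] EuclideanSpace ℝ (Fin 2))^2) y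
              = (T - 1) ((T - 1) y) := by
            rw [pow_two, ContinuousLinearMap.mul_apply]
          rw [hsq]
          have hQa : ∀ (z : EuclideanSpace ℝ (Fin 2)) (i : Fin 2),
              (T - 1 : EuclideanSpace ℝ (Fin 2) →L[ℝ] EuclideanSpace ℝ (Fin 2)) z i
                = T z i - z i := by
            intro z i
            rw [ContinuousLinearMap.sub_apply, ContinuousLinearMap.one_apply, PiLp.sub_apply]
          have key : ∀ i : Fin 2, (T - 1) ((T - 1) y) i = 0 := by
            intro i
            simp only [hQa, haa]
            fin_cases i <;> simp only [Fin.zero_eta, Fin.mk_one, Fin.isValue]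
            · linear_combination (y 0 * A 0 0 + y 1 * A 0 1) * ht - y 0 * hdet
            · linear_combination (y 0 * A 1 0 + y 1 * A 1 1) * ht - y 1 * hdet
          ext i
          rw [key i, ContinuousLinearMap.zero_apply, PiLp.zero_apply]
      · refine ⟨T + 1, ?_, ⟨2, ?_⟩, Or.inr (by abel)⟩
        · intro hQ0
          have hT1 : T = -1 := by
            have := eq_neg_of_add_eq_zero_left hQ0
            exact this
          refine hnot2 (isM2_of_norm ?_)
          intro z
          rw [hT1, ContinuousLinearMap.neg_apply, ContinuousLinearMap.one_apply, norm_neg]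
        · apply ContinuousLinearMap.ext
          intro y
          have hsq : ((T + 1 : EuclideanSpace ℝ (Fin 2) →L[ℝ] EuclideanSpace ℝ (Fin 2))^2) y
              = (T + 1) ((T + 1) y) := by
            rw [pow_two, ContinuousLinearMap.mul_apply]
          rw [hsq]
          have hQa : ∀ (z : EuclideanSpace ℝ (Fin 2)) (i : Fin 2),
              (T + 1 : EuclideanSpace ℝ (Fin 2) →L[ℝ] EuclideanSpace ℝ (Fin 2)) z i
                = T z i + z i := by
            intro z i
            rw [ContinuousLinearMap.add_apply, ContinuousLinearMap.one_apply, PiLp.add_apply]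
          have key : ∀ i : Fin 2, (T + 1) ((T + 1) y) i = 0 := by
            intro i
            simp only [hQa, haa]
            fin_cases i <;> simp only [Fin.zero_eta, Fin.mk_one, Fin.isValue]
            · linear_combination (y 0 * A 0 0 + y 1 * A 0 1) * ht - y 0 * hdet
            · linear_combination (y 0 * A 1 0 + y 1 * A 1 1) * ht - y 1 * hdet
          ext i
          rw [key i, ContinuousLinearMap.zero_apply, PiLp.zero_apply]
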